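/- arXiv:1703.10233 — 3 statements merged into one kernel-verified Lean document; each statement's English description precedes it below -/
import Mathlib

section
/- For every H ∈ (0,1], every n ∈ ℕ, all times t_1,…,t_n ∈ [0,∞) and all real coefficients c_1,…,c_n, one has Σ_{i=1}^n Σ_{j=1}^n c_i c_j · ½(t_i^{2H} + t_j^{2H} − |t_i − t_j|^{2H}) ≥ 0; that is, the fractional Brownian motion covariance kernel cov_H is positive semidefinite on [0,∞) × [0,∞). -/
open MeasureTheory Real Set


lemma aux_cos_bound (x : ℝ) : 1 - Real.cos x ≤ x ^ 2 / 2 := by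
  have h2 : Real.cos x = 2 * Real.cos (x / 2) ^ 2 - 1 := by
    have := Real.cos_two_mul (x / 2)
    rwa [mul_div_cancel₀ _ (two_ne_zero)] at this
  have h3 : Real.sin (x / 2) ^ 2 ≤ (x / 2) ^ 2 := Real.sin_sq_le_sq
  have h4 := Real.sin_sq_add_cos_sq (x / 2)
  nlinarith

lemma aux_meas (α a : ℝ) : Measurable (fun x : ℝ => (1 - Real.cos (a * x)) * x ^ (-1 - α)) := by
  fun_prop

lemma aux_integrable (α : ℝ) (hα : 0 < α) (hα2 : α < 2) (a : ℝ) :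
    IntegrableOn (fun x : ℝ => (1 - Real.cos (a * x)) * x ^ (-1 - α)) (Ioi 0) := by
  have hm := aux_meas α a
  rw [← Set.Ioc_union_Ioi_eq_Ioi (zero_le_one' ℝ)]
  refine IntegrableOn.union ?_ ?_
  · -- near 0 : dominate by (a^2/2) * x^(1-α)
    have hint : IntegrableOn (fun x : ℝ => x ^ (1 - α)) (Ioc 0 1) :=
      (intervalIntegral.intervalIntegrable_rpow' (by linarith)).1
    refine (hint.const_mul (a ^ 2 / 2)).mono hm.aestronglyMeasurable.restrict ?_
    filter_upwards [ae_restrict_mem measurableSet_Ioc] with x hx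
    have hx0 : 0 < x := hx.1
    have hc1 : (0:ℝ) ≤ 1 - Real.cos (a * x) := by
      have := Real.cos_le_one (a * x); linarith
    have hp : (0:ℝ) ≤ x ^ (-1 - α) := Real.rpow_nonneg hx0.le _
    rw [Real.norm_eq_abs, Real.norm_eq_abs, abs_of_nonneg (mul_nonneg hc1 hp)]
    have hb : 1 - Real.cos (a * x) ≤ a ^ 2 / 2 * x ^ (2:ℕ) := by
      have := aux_cos_bound (a * x); rw [mul_pow] at this
      calc 1 - Real.cos (a * x) ≤ (a * x) ^ 2 / 2 := aux_cos_bound (a * x)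
        _ = a ^ 2 / 2 * x ^ (2:ℕ) := by ring
    have key : x ^ (2:ℕ) * x ^ (-1 - α) = x ^ (1 - α) := by
      rw [← Real.rpow_natCast x 2, ← Real.rpow_add hx0]; norm_num; ring_nf
    calc (1 - Real.cos (a * x)) * x ^ (-1 - α)
        ≤ (a ^ 2 / 2 * x ^ (2:ℕ)) * x ^ (-1 - α) := mul_le_mul_of_nonneg_right hb hp
      _ = a ^ 2 / 2 * x ^ (1 - α) := by rw [mul_assoc, key]
      _ ≤ |a ^ 2 / 2 * x ^ (1 - α)| := le_abs_self _
  · -- near ∞ : dominate by 2 * x^(-1-α)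
    have hint : IntegrableOn (fun x : ℝ => x ^ (-1 - α)) (Ioi 1) :=
      integrableOn_Ioi_rpow_of_lt (by linarith) one_pos
    refine (hint.const_mul 2).mono hm.aestronglyMeasurable.restrict ?_
    filter_upwards [ae_restrict_mem measurableSet_Ioi] with x hx
    have hx0 : (0:ℝ) < x := lt_trans one_pos hx
    have hc1 : (0:ℝ) ≤ 1 - Real.cos (a * x) := by
      have := Real.cos_le_one (a * x); linarith
    have hc2 : 1 - Real.cos (a * x) ≤ 2 := by
      have := Real.neg_one_le_cos (a * x); linarith
    have hp : (0:ℝ) ≤ x ^ (-1 - α) := Real.rpow_nonneg hx0.le _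
    rw [Real.norm_eq_abs, Real.norm_eq_abs, abs_of_nonneg (mul_nonneg hc1 hp)]
    calc (1 - Real.cos (a * x)) * x ^ (-1 - α) ≤ 2 * x ^ (-1 - α) :=
          mul_le_mul_of_nonneg_right hc2 hp
      _ ≤ |2 * x ^ (-1 - α)| := le_abs_self _


lemma aux_scaling (α : ℝ) (hα : 0 < α) {x : ℝ} (hx : 0 ≤ x) :
    ∫ u in Set.Ioi (0:ℝ), (1 - Real.cos (x * u)) * u ^ (-1 - α) =
      x ^ α * ∫ u in Set.Ioi (0:ℝ), (1 - Real.cos u) * u ^ (-1 - α) := by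
  rcases hx.eq_or_lt with h0 | h0
  · simp [← h0, Real.zero_rpow hα.ne']
  · have key : ∀ u ∈ Set.Ioi (0:ℝ),
        (1 - Real.cos (x * u)) * u ^ (-1 - α)
          = x ^ (1 + α) * ((1 - Real.cos (x * u)) * (x * u) ^ (-1 - α)) := by
      intro u hu
      rw [Real.mul_rpow h0.le (le_of_lt hu)]
      have hxx : x ^ (1 + α) * x ^ (-1 - α) = 1 := by
        rw [← Real.rpow_add h0]; norm_num
      calc (1 - Real.cos (x * u)) * u ^ (-1 - α)
          = (x ^ (1 + α) * x ^ (-1 - α)) * ((1 - Real.cos (x * u)) * u ^ (-1 - α)) := by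
            rw [hxx, one_mul]
        _ = x ^ (1 + α) * ((1 - Real.cos (x * u)) * (x ^ (-1 - α) * u ^ (-1 - α))) := by ring
    rw [setIntegral_congr_fun measurableSet_Ioi key, integral_const_mul,
      MeasureTheory.integral_comp_mul_left_Ioi (fun u => (1 - Real.cos u) * u ^ (-1 - α)) 0 h0,
      mul_zero, smul_eq_mul, ← mul_assoc]
    congr 1
    rw [Real.rpow_add h0, Real.rpow_one]
    field_simp

lemma aux_I_pos (α : ℝ) (hα : 0 < α) (hα2 : α < 2) :
    0 < ∫ u in Set.Ioi (0:ℝ), (1 - Real.cos u) * u ^ (-1 - α) := by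
  have hint : IntegrableOn (fun x : ℝ => (1 - Real.cos x) * x ^ (-1 - α)) (Ioi 0) := by
    have := aux_integrable α hα hα2 1
    simpa using this
  have hpi := Real.pi_gt_three
  have hcos1 : Real.cos 1 < 1 := by
    have := Real.cos_lt_cos_of_nonneg_of_le_pi (le_refl (0:ℝ)) (by linarith) one_pos
    simpa using this
  set cns : ℝ := (1 - Real.cos 1) * (2:ℝ) ^ (-1 - α) with hc
  have hcpos : 0 < cns := by
    apply mul_pos (by linarith)
    exact Real.rpow_pos_of_pos two_pos _
  have h1 : cns * (volume (Ioc (1:ℝ) 2)).toReal ≤ ∫ u in Ioc (1:ℝ) 2, (1 - Real.cos u) * u ^ (-1 - α) := by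
    apply setIntegral_ge_of_const_le_real measurableSet_Ioc
    · exact (measure_Ioc_lt_top).ne
    · intro x hx
      have hx1 : (1:ℝ) ≤ x := hx.1.le
      have hx0 : (0:ℝ) < x := lt_of_lt_of_le one_pos hx1
      have hcx : Real.cos x ≤ Real.cos 1 :=
        Real.cos_le_cos_of_nonneg_of_le_pi zero_le_one (by linarith [hx.2]) hx1
      have hrp : (2:ℝ) ^ (-1 - α) ≤ x ^ (-1 - α) :=
        Real.rpow_le_rpow_of_nonpos hx0 hx.2 (by linarith)
      exact mul_le_mul (by linarith) hrp (Real.rpow_nonneg two_pos.le _) (by linarith)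
    · exact hint.mono_set (fun x hx => lt_of_lt_of_le one_pos hx.1.le)
  have h2 : ∫ u in Ioc (1:ℝ) 2, (1 - Real.cos u) * u ^ (-1 - α)
      ≤ ∫ u in Ioi (0:ℝ), (1 - Real.cos u) * u ^ (-1 - α) := by
    apply setIntegral_mono_set hint
    · filter_upwards [ae_restrict_mem measurableSet_Ioi] with x hx
      exact mul_nonneg (by linarith [Real.cos_le_one x]) (Real.rpow_nonneg (le_of_lt hx) _)
    · exact HasSubset.Subset.eventuallyLE (fun x hx => lt_of_lt_of_le one_pos hx.1.le)
  have hvol : (volume (Ioc (1:ℝ) 2)).toReal = 1 := by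
    rw [Real.volume_Ioc]; norm_num
  calc (0:ℝ) < cns * (volume (Ioc (1:ℝ) 2)).toReal := by rw [hvol]; simpa using hcpos
    _ ≤ _ := le_trans h1 h2

/-- The fractional Brownian motion covariance kernel
`cov_H(t,s) = ½(t^{2H} + s^{2H} − |t−s|^{2H})` is positive semidefinite on `[0,∞) × [0,∞)`
for every Hurst parameter `H ∈ (0,1]`. -/
theorem fbm_covariance_posSemidef (H : ℝ) (hH : H ∈ Set.Ioc (0 : ℝ) 1)
    (n : ℕ) (t : Fin n → ℝ) (ht : ∀ i, 0 ≤ t i) (c : Fin n → ℝ) :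
    0 ≤ ∑ i, ∑ j, c i * c j *
      ((1 : ℝ) / 2 * (t i ^ (2 * H) + t j ^ (2 * H) - |t i - t j| ^ (2 * H))) := by
  obtain ⟨hH0, hH1⟩ := hH
  rcases hH1.eq_or_lt with h1 | h1
  · -- H = 1
    have h1' : H = 1 := h1
    have e2 : ∀ y : ℝ, y ^ (2 * H) = y ^ (2:ℕ) := by
      intro y
      rw [h1', mul_one, show (2:ℝ) = ((2:ℕ):ℝ) by norm_num, Real.rpow_natCast]
    have e : ∀ i j : Fin n, (c i * t i) * (c j * t j) = c i * c j *
        ((1:ℝ)/2 * (t i ^ (2*H) + t j ^ (2*H) - |t i - t j| ^ (2*H))) := by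
      intro i j
      rw [e2, e2, e2, sq_abs]
      ring
    calc (0:ℝ) ≤ (∑ i, c i * t i) * (∑ j, c j * t j) := mul_self_nonneg _
      _ = ∑ i, ∑ j, (c i * t i) * (c j * t j) := Finset.sum_mul_sum _ _ _ _
      _ = _ := Finset.sum_congr rfl fun i _ => Finset.sum_congr rfl fun j _ => e i j
  · -- H < 1
    set α := 2 * H with hαdef
    have hα : 0 < α := by positivity
    have hα2 : α < 2 := by rw [hαdef]; linarith
    set I := ∫ u in Set.Ioi (0:ℝ), (1 - Real.cos u) * u ^ (-1 - α) with hIdef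
    have hI : 0 < I := aux_I_pos α hα hα2
    rw [← mul_nonneg_iff_of_pos_right hI]
    have hFint : ∀ a : ℝ, IntegrableOn (fun x : ℝ => (1 - Real.cos (a * x)) * x ^ (-1 - α))
        (Ioi 0) := aux_integrable α hα hα2
    have habs : ∀ a : ℝ, (∫ x in Ioi (0:ℝ), (1 - Real.cos (a * x)) * x ^ (-1 - α))
        = |a| ^ α * I := by
      intro a
      rw [← aux_scaling α hα (abs_nonneg a)]
      rcases abs_cases a with ⟨h, _⟩ | ⟨h, _⟩
      · rw [h]
      · rw [h]
        apply setIntegral_congr_fun measurableSet_Ioi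
        intro x hx
        simp only [neg_mul, Real.cos_neg]
    have hint2 : ∀ i j : Fin n, Integrable (fun x : ℝ => c i * c j * ((1:ℝ)/2 *
        ((1 - Real.cos (t i * x)) * x ^ (-1-α) + (1 - Real.cos (t j * x)) * x ^ (-1-α)
          - (1 - Real.cos ((t i - t j) * x)) * x ^ (-1-α)))) (volume.restrict (Ioi 0)) := by
      intro i j
      refine (((((hFint (t i)).add (hFint (t j))).sub (hFint (t i - t j))).const_mul
        (c i * c j * ((1:ℝ)/2))).congr ?_)
      exact ae_of_all _ fun x => by simp only [Pi.add_apply, Pi.sub_apply]; ring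
    have hterm : ∀ i j : Fin n,
        c i * c j * ((1:ℝ)/2 * (t i ^ α + t j ^ α - |t i - t j| ^ α)) * I
          = ∫ x in Ioi (0:ℝ), c i * c j * ((1:ℝ)/2 *
              ((1 - Real.cos (t i * x)) * x ^ (-1-α) + (1 - Real.cos (t j * x)) * x ^ (-1-α)
                - (1 - Real.cos ((t i - t j) * x)) * x ^ (-1-α))) := by
      intro i j
      have hfi : Integrable (fun x : ℝ => (1 - Real.cos (t i * x)) * x ^ (-1-α))
          (volume.restrict (Ioi 0)) := hFint (t i)
      have hfj : Integrable (fun x : ℝ => (1 - Real.cos (t j * x)) * x ^ (-1-α))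
          (volume.restrict (Ioi 0)) := hFint (t j)
      have hfij : Integrable (fun x : ℝ => (1 - Real.cos ((t i - t j) * x)) * x ^ (-1-α))
          (volume.restrict (Ioi 0)) := hFint (t i - t j)
      have hfAB : Integrable (fun x : ℝ => (1 - Real.cos (t i * x)) * x ^ (-1-α)
          + (1 - Real.cos (t j * x)) * x ^ (-1-α)) (volume.restrict (Ioi 0)) := hfi.add hfj
      have e1 : t i ^ α * I = ∫ x in Ioi (0:ℝ), (1 - Real.cos (t i * x)) * x ^ (-1-α) := by
        rw [habs (t i), abs_of_nonneg (ht i)]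
      have e2 : t j ^ α * I = ∫ x in Ioi (0:ℝ), (1 - Real.cos (t j * x)) * x ^ (-1-α) := by
        rw [habs (t j), abs_of_nonneg (ht j)]
      have e3 : |t i - t j| ^ α * I
          = ∫ x in Ioi (0:ℝ), (1 - Real.cos ((t i - t j) * x)) * x ^ (-1-α) :=
        (habs (t i - t j)).symm
      calc c i * c j * ((1:ℝ)/2 * (t i ^ α + t j ^ α - |t i - t j| ^ α)) * I
          = c i * c j * ((1:ℝ)/2 * (t i ^ α * I + t j ^ α * I - |t i - t j| ^ α * I)) := by
            ring
        _ = c i * c j * ((1:ℝ)/2 *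
              ((∫ x in Ioi (0:ℝ), (1 - Real.cos (t i * x)) * x ^ (-1-α))
                + (∫ x in Ioi (0:ℝ), (1 - Real.cos (t j * x)) * x ^ (-1-α))
                - ∫ x in Ioi (0:ℝ), (1 - Real.cos ((t i - t j) * x)) * x ^ (-1-α))) := by
            rw [e1, e2, e3]
        _ = c i * c j * ((1:ℝ)/2 * (∫ x in Ioi (0:ℝ),
              ((1 - Real.cos (t i * x)) * x ^ (-1-α) + (1 - Real.cos (t j * x)) * x ^ (-1-α)
                - (1 - Real.cos ((t i - t j) * x)) * x ^ (-1-α)))) := by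
            rw [MeasureTheory.integral_sub hfAB hfij, MeasureTheory.integral_add hfi hfj]
        _ = _ := by
            rw [MeasureTheory.integral_const_mul, MeasureTheory.integral_const_mul]
    calc (0:ℝ)
        ≤ ∫ x in Ioi (0:ℝ), ∑ i, ∑ j, (c i * c j * ((1:ℝ)/2 *
              ((1 - Real.cos (t i * x)) * x ^ (-1-α) + (1 - Real.cos (t j * x)) * x ^ (-1-α)
                - (1 - Real.cos ((t i - t j) * x)) * x ^ (-1-α)))) := by
          apply MeasureTheory.setIntegral_nonneg measurableSet_Ioi
          intro x hx
          have hp : (0:ℝ) ≤ x ^ (-1-α) := Real.rpow_nonneg (le_of_lt hx) _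
          have expand : ∀ i j : Fin n, ((1:ℝ)/2 * x ^ (-1-α)) *
              ((c i * (Real.cos (t i * x) - 1)) * (c j * (Real.cos (t j * x) - 1))
                + (c i * Real.sin (t i * x)) * (c j * Real.sin (t j * x)))
              = c i * c j * ((1:ℝ)/2 *
              ((1 - Real.cos (t i * x)) * x ^ (-1-α) + (1 - Real.cos (t j * x)) * x ^ (-1-α)
                - (1 - Real.cos ((t i - t j) * x)) * x ^ (-1-α))) := by
            intro i j
            rw [show (t i - t j) * x = t i * x - t j * x by ring, Real.cos_sub]
            ring
          calc (0:ℝ)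
              ≤ ((1:ℝ)/2 * x ^ (-1-α)) *
                  ((∑ i, c i * (Real.cos (t i * x) - 1))^2
                    + (∑ i, c i * Real.sin (t i * x))^2) := by
                apply mul_nonneg (mul_nonneg (by norm_num) hp)
                positivity
            _ = _ := by
                rw [sq, sq, Finset.sum_mul_sum, Finset.sum_mul_sum, ← Finset.sum_add_distrib,
                  Finset.mul_sum]
                refine Finset.sum_congr rfl fun i _ => ?_
                rw [← Finset.sum_add_distrib, Finset.mul_sum]
                exact Finset.sum_congr rfl fun j _ => expand i j
      _ = ∑ i, ∑ j, ∫ x in Ioi (0:ℝ), (c i * c j * ((1:ℝ)/2 *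
              ((1 - Real.cos (t i * x)) * x ^ (-1-α) + (1 - Real.cos (t j * x)) * x ^ (-1-α)
                - (1 - Real.cos ((t i - t j) * x)) * x ^ (-1-α)))) := by
          rw [MeasureTheory.integral_finset_sum Finset.univ
            (fun i _ => integrable_finset_sum Finset.univ (fun j _ => hint2 i j))]
          exact Finset.sum_congr rfl fun i _ =>
            MeasureTheory.integral_finset_sum Finset.univ (fun j _ => hint2 i j)
      _ = (∑ i, ∑ j, c i * c j *
            ((1:ℝ)/2 * (t i ^ α + t j ^ α - |t i - t j| ^ α))) * I := by
          rw [Finset.sum_mul]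
          refine Finset.sum_congr rfl fun i _ => ?_
          rw [Finset.sum_mul]
          exact Finset.sum_congr rfl fun j _ => (hterm i j).symm
end

section
/- For every H ∈ (0,1], every n ∈ ℕ, all real numbers t_1,…,t_n and all real coefficients c_1,…,c_n with Σ_{i=1}^n c_i = 0, one has Σ_{i=1}^n Σ_{j=1}^n c_i c_j |t_i − t_j|^{2H} ≤ 0; that is, the kernel (t,s) ↦ |t−s|^{2H} is negative definite on ℝ. -/
open MeasureTheory Real Set

-- integrability of the kernel integrand
lemma negdef_integ (α x : ℝ) (hα0 : 0 < α) (hα2 : α < 2) :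
    IntegrableOn (fun u : ℝ => (1 - Real.cos (x * u)) * u ^ (-(1 + α))) (Set.Ioi (0:ℝ)) := by
  have hmeas : AEStronglyMeasurable (fun u : ℝ => (1 - Real.cos (x * u)) * u ^ (-(1 + α)))
      (volume.restrict (Set.Ioi (0:ℝ))) := by
    apply Measurable.aestronglyMeasurable
    exact (measurable_const.sub ((measurable_const_mul x).cos)).mul
      (measurable_id.pow_const _)
  have h1 : IntegrableOn (fun u : ℝ => (1 - Real.cos (x * u)) * u ^ (-(1 + α)))
      (Set.Ioc (0:ℝ) 1) := by
    have hint : IntegrableOn (fun u : ℝ => (x ^ 2 / 2) * u ^ (1 - α)) (Set.Ioc (0:ℝ) 1) := by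
      have : IntervalIntegrable (fun u : ℝ => u ^ (1 - α)) volume 0 1 :=
        intervalIntegral.intervalIntegrable_rpow' (by linarith)
      rw [intervalIntegrable_iff_integrableOn_Ioc_of_le (by norm_num)] at this
      exact this.const_mul _
    refine Integrable.mono hint (hmeas.mono_set Set.Ioc_subset_Ioi_self) ?_
    filter_upwards [ae_restrict_mem measurableSet_Ioc] with u hu
    have hu0 : 0 < u := hu.1
    have hcos : Real.cos (x * u) ≤ 1 := Real.cos_le_one _
    have hcos2 : 1 - (x * u) ^ 2 / 2 ≤ Real.cos (x * u) := Real.one_sub_sq_div_two_le_cos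
    have hpow : (0:ℝ) ≤ u ^ (-(1 + α)) := Real.rpow_nonneg hu0.le _
    have hg0 : (0:ℝ) ≤ x ^ 2 / 2 * u ^ (1 - α) :=
      mul_nonneg (by positivity) (Real.rpow_nonneg hu0.le _)
    rw [Real.norm_eq_abs, Real.norm_eq_abs, abs_of_nonneg hg0, abs_of_nonneg
      (mul_nonneg (by linarith) hpow)]
    have : (1 - Real.cos (x * u)) * u ^ (-(1 + α)) ≤ ((x * u) ^ 2 / 2) * u ^ (-(1 + α)) :=
      mul_le_mul_of_nonneg_right (by linarith) hpow
    refine this.trans (le_of_eq ?_)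
    have hmul : u ^ (2:ℕ) * u ^ (-(1 + α)) = u ^ (1 - α) := by
      rw [← Real.rpow_natCast u 2, ← Real.rpow_add hu0]; congr 1; push_cast; ring
    calc (x * u) ^ 2 / 2 * u ^ (-(1 + α))
        = x ^ 2 / 2 * (u ^ (2:ℕ) * u ^ (-(1 + α))) := by ring
      _ = x ^ 2 / 2 * u ^ (1 - α) := by rw [hmul]
  have h2 : IntegrableOn (fun u : ℝ => (1 - Real.cos (x * u)) * u ^ (-(1 + α)))
      (Set.Ioi (1:ℝ)) := by
    have hint : IntegrableOn (fun u : ℝ => 2 * u ^ (-(1 + α))) (Set.Ioi (1:ℝ)) :=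
      (integrableOn_Ioi_rpow_of_lt (by linarith) one_pos).const_mul _
    refine Integrable.mono hint (hmeas.mono_set (Set.Ioi_subset_Ioi (by norm_num))) ?_
    filter_upwards [ae_restrict_mem measurableSet_Ioi] with u hu
    have hu0 : (0:ℝ) < u := lt_trans one_pos hu
    have hcos : Real.cos (x * u) ≤ 1 := Real.cos_le_one _
    have hcos' : -1 ≤ Real.cos (x * u) := Real.neg_one_le_cos _
    have hpow : (0:ℝ) ≤ u ^ (-(1 + α)) := Real.rpow_nonneg hu0.le _
    have hg0 : (0:ℝ) ≤ 2 * u ^ (-(1 + α)) := by linarith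
    rw [Real.norm_eq_abs, Real.norm_eq_abs, abs_of_nonneg hg0, abs_of_nonneg
      (mul_nonneg (by linarith) hpow)]
    exact mul_le_mul_of_nonneg_right (by linarith) hpow
  have := h1.union h2
  rwa [Set.Ioc_union_Ioi_eq_Ioi (by norm_num : (0:ℝ) ≤ 1)] at this

lemma negdef_Ipos (α : ℝ) (hα0 : 0 < α) (hα2 : α < 2) :
    0 < ∫ v in Set.Ioi (0:ℝ), (1 - Real.cos v) * v ^ (-(1 + α)) := by
  have hint : IntegrableOn (fun v : ℝ => (1 - Real.cos v) * v ^ (-(1 + α))) (Set.Ioi (0:ℝ)) := by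
    have := negdef_integ α 1 hα0 hα2
    simpa using this
  have hnn : ∀ v ∈ Set.Ioi (0:ℝ), 0 ≤ (1 - Real.cos v) * v ^ (-(1 + α)) := fun v hv =>
    mul_nonneg (by linarith [Real.cos_le_one v]) (Real.rpow_nonneg (le_of_lt hv) _)
  have hsub : Set.Ioc (1:ℝ) 2 ⊆ Set.Ioi (0:ℝ) := fun v hv => lt_trans one_pos hv.1
  have hmono : ∫ v in Set.Ioc (1:ℝ) 2, (1 - Real.cos v) * v ^ (-(1 + α))
      ≤ ∫ v in Set.Ioi (0:ℝ), (1 - Real.cos v) * v ^ (-(1 + α)) := by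
    apply setIntegral_mono_set hint
    · filter_upwards [ae_restrict_mem measurableSet_Ioi] with v hv using hnn v hv
    · exact HasSubset.Subset.eventuallyLE hsub
  refine lt_of_lt_of_le ?_ hmono
  have hc : (0:ℝ) < (1 - Real.cos 1) * 2 ^ (-(1 + α)) := by
    have h1 : Real.cos 1 < 1 := by
      have := Real.cos_lt_cos_of_nonneg_of_le_pi le_rfl (by linarith [Real.pi_gt_three]) one_pos
      simpa using this
    have : (0:ℝ) < (2:ℝ) ^ (-(1 + α)) := Real.rpow_pos_of_pos (by norm_num) _
    exact mul_pos (by linarith) this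
  have hlb : ∀ v ∈ Set.Ioc (1:ℝ) 2, (1 - Real.cos 1) * 2 ^ (-(1 + α))
      ≤ (1 - Real.cos v) * v ^ (-(1 + α)) := by
    intro v hv
    have hv1 : (1:ℝ) ≤ v := hv.1.le
    have hcos : Real.cos v ≤ Real.cos 1 :=
      Real.cos_le_cos_of_nonneg_of_le_pi (by norm_num)
        (hv.2.trans (by linarith [Real.pi_gt_three])) hv1
    have hpow : (2:ℝ) ^ (-(1 + α)) ≤ v ^ (-(1 + α)) :=
      Real.rpow_le_rpow_of_nonpos (lt_of_lt_of_le one_pos hv1) hv.2 (by linarith)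
    have h1 : Real.cos 1 < 1 := by
      have := Real.cos_lt_cos_of_nonneg_of_le_pi le_rfl (by linarith [Real.pi_gt_three]) one_pos
      simpa using this
    have hpow0 : (0:ℝ) ≤ (2:ℝ) ^ (-(1 + α)) := Real.rpow_nonneg (by norm_num) _
    calc (1 - Real.cos 1) * 2 ^ (-(1 + α)) ≤ (1 - Real.cos v) * 2 ^ (-(1 + α)) :=
          mul_le_mul_of_nonneg_right (by linarith) hpow0
      _ ≤ (1 - Real.cos v) * v ^ (-(1 + α)) :=
          mul_le_mul_of_nonneg_left hpow (by linarith)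
  have hkey := setIntegral_ge_of_const_le (measurableSet_Ioc)
    (by simp : volume (Set.Ioc (1: ℝ) 2) ≠ ⊤) hlb (hint.mono_set hsub)
  have hμ : (volume (Set.Ioc (1:ℝ) 2)).toReal = 1 := by
    simp [Real.volume_Ioc]; norm_num
  rw [measureReal_def, hμ, one_smul] at hkey
  linarith

lemma negdef_scaled (α : ℝ) (hα0 : 0 < α) (hα2 : α < 2) (x : ℝ) :
    ∫ u in Set.Ioi (0:ℝ), (1 - Real.cos (x * u)) * u ^ (-(1 + α))
      = |x| ^ α * ∫ v in Set.Ioi (0:ℝ), (1 - Real.cos v) * v ^ (-(1 + α)) := by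
  rcases eq_or_ne x 0 with rfl | hx
  · simp [Real.rpow_natCast, Real.zero_rpow hα0.ne']
  · have hb : 0 < |x| := abs_pos.mpr hx
    have h1 : ∫ u in Set.Ioi (0:ℝ), (1 - Real.cos (x * u)) * u ^ (-(1 + α))
        = ∫ u in Set.Ioi (0:ℝ), |x| ^ (1 + α) *
            ((1 - Real.cos (|x| * u)) * (|x| * u) ^ (-(1 + α))) := by
      apply setIntegral_congr_fun measurableSet_Ioi
      intro u hu
      have hu0 : (0:ℝ) < u := hu
      show (1 - Real.cos (x * u)) * u ^ (-(1 + α))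
        = |x| ^ (1 + α) * ((1 - Real.cos (|x| * u)) * (|x| * u) ^ (-(1 + α)))
      have hcos : Real.cos (x * u) = Real.cos (|x| * u) := by
        rcases abs_choice x with h | h
        · rw [h]
        · rw [h]; simp [neg_mul, Real.cos_neg]
      rw [hcos, Real.mul_rpow hb.le hu0.le]
      have hone : |x| ^ (1 + α) * |x| ^ (-(1 + α)) = 1 := by
        rw [← Real.rpow_add hb, show (1 + α + -(1 + α) : ℝ) = 0 by ring, Real.rpow_zero]
      calc (1 - Real.cos (|x| * u)) * u ^ (-(1 + α))
          = (|x| ^ (1 + α) * |x| ^ (-(1 + α))) * ((1 - Real.cos (|x| * u)) * u ^ (-(1 + α))) := by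
            rw [hone]; ring
        _ = |x| ^ (1 + α) * ((1 - Real.cos (|x| * u)) * (|x| ^ (-(1 + α)) * u ^ (-(1 + α)))) := by
            ring
    rw [h1, integral_const_mul]
    have h2 : ∫ u in Set.Ioi (0:ℝ), (1 - Real.cos (|x| * u)) * (|x| * u) ^ (-(1 + α))
        = |x|⁻¹ * ∫ v in Set.Ioi (0:ℝ), (1 - Real.cos v) * v ^ (-(1 + α)) := by
      have := integral_comp_mul_left_Ioi
        (fun v : ℝ => (1 - Real.cos v) * v ^ (-(1 + α))) 0 hb
      rw [mul_zero] at this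
      rw [this, smul_eq_mul]
    rw [h2, ← mul_assoc]
    congr 1
    rw [← Real.rpow_neg_one |x|, ← Real.rpow_add hb]
    congr 1; ring

lemma negdef_sum_cos (n : ℕ) (c a : Fin n → ℝ) (hc : ∑ i, c i = 0) :
    ∑ i, ∑ j, c i * c j * (1 - Real.cos (a i - a j))
      = -((∑ i, c i * Real.cos (a i)) ^ 2 + (∑ i, c i * Real.sin (a i)) ^ 2) := by
  have h : ∀ i j, c i * c j * (1 - Real.cos (a i - a j))
      = c i * c j - (c i * Real.cos (a i)) * (c j * Real.cos (a j))
        - (c i * Real.sin (a i)) * (c j * Real.sin (a j)) := by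
    intro i j; rw [Real.cos_sub]; ring
  simp_rw [h, Finset.sum_sub_distrib, ← Finset.mul_sum, ← Finset.sum_mul, hc]
  ring

/-- For `H ∈ (0,1]`, the kernel `(t,s) ↦ |t−s|^{2H}` is negative definite on `ℝ`:
for all coefficients summing to zero, the associated quadratic form is nonpositive. -/
theorem abs_rpow_negDef (H : ℝ) (hH : H ∈ Set.Ioc (0 : ℝ) 1)
    (n : ℕ) (t : Fin n → ℝ) (c : Fin n → ℝ) (hc : ∑ i, c i = 0) :
    ∑ i, ∑ j, c i * c j * |t i - t j| ^ (2 * H) ≤ 0 := by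
  obtain ⟨hH0, hH1⟩ := hH
  rcases eq_or_lt_of_le hH1 with rfl | hHlt
  · -- H = 1 : quadratic case
    have h2 : (2 : ℝ) * 1 = ((2 : ℕ) : ℝ) := by norm_num
    have hpt : ∀ i j, c i * c j * |t i - t j| ^ ((2:ℝ) * 1)
        = c i * c j * t i ^ 2 + c i * c j * t j ^ 2 - 2 * (c i * t i) * (c j * t j) := by
      intro i j
      rw [h2, Real.rpow_natCast, sq_abs]
      ring
    simp_rw [hpt]
    have inner : ∀ i : Fin n, ∑ j, (c i * c j * t i ^ 2 + c i * c j * t j ^ 2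
        - 2 * (c i * t i) * (c j * t j))
        = c i * t i ^ 2 * (∑ j, c j) + c i * (∑ j, c j * t j ^ 2)
          - 2 * (c i * t i) * (∑ j, c j * t j) := by
      intro i
      rw [Finset.mul_sum, Finset.mul_sum, Finset.mul_sum, ← Finset.sum_add_distrib,
        ← Finset.sum_sub_distrib]
      exact Finset.sum_congr rfl fun j _ => by ring
    simp_rw [inner, hc, mul_zero, zero_add]
    rw [Finset.sum_sub_distrib, ← Finset.sum_mul, ← Finset.sum_mul, hc, zero_mul, zero_sub,
      neg_nonpos]
    have : ∑ i, 2 * (c i * t i) = 2 * ∑ i, c i * t i := by rw [Finset.mul_sum]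
    rw [this]
    nlinarith [sq_nonneg (∑ i, c i * t i)]
  · -- 0 < H < 1 : integral representation
    set α := 2 * H with hα
    have hα0 : 0 < α := by positivity
    have hα2 : α < 2 := by rw [hα]; linarith
    set I := ∫ v in Set.Ioi (0:ℝ), (1 - Real.cos v) * v ^ (-(1 + α)) with hI
    have hIpos : 0 < I := negdef_Ipos α hα0 hα2
    set S := ∑ i, ∑ j, c i * c j * |t i - t j| ^ α with hS
    have key : S * I ≤ 0 := by
      have e1 : ∀ i j : Fin n, c i * c j * |t i - t j| ^ α * I
          = ∫ u in Set.Ioi (0:ℝ),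
              c i * c j * ((1 - Real.cos ((t i - t j) * u)) * u ^ (-(1 + α))) := by
        intro i j
        rw [integral_const_mul, negdef_scaled α hα0 hα2 (t i - t j), hI]
        ring
      have hSI : S * I = ∑ i, ∑ j, ∫ u in Set.Ioi (0:ℝ),
          c i * c j * ((1 - Real.cos ((t i - t j) * u)) * u ^ (-(1 + α))) := by
        rw [hS, Finset.sum_mul]
        refine Finset.sum_congr rfl fun i _ => ?_
        rw [Finset.sum_mul]
        exact Finset.sum_congr rfl fun j _ => e1 i j
      have hintij : ∀ i j : Fin n, Integrable (fun u : ℝ =>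
          c i * c j * ((1 - Real.cos ((t i - t j) * u)) * u ^ (-(1 + α))))
          (volume.restrict (Set.Ioi (0:ℝ))) := fun i j =>
        (negdef_integ α (t i - t j) hα0 hα2).const_mul _
      have hswap : ∑ i, ∑ j, ∫ u in Set.Ioi (0:ℝ),
          c i * c j * ((1 - Real.cos ((t i - t j) * u)) * u ^ (-(1 + α)))
          = ∫ u in Set.Ioi (0:ℝ), ∑ i, ∑ j,
              c i * c j * ((1 - Real.cos ((t i - t j) * u)) * u ^ (-(1 + α))) := by
        have h1 : ∫ u in Set.Ioi (0:ℝ), ∑ i, ∑ j,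
            c i * c j * ((1 - Real.cos ((t i - t j) * u)) * u ^ (-(1 + α)))
            = ∑ i, ∫ u in Set.Ioi (0:ℝ), ∑ j,
                c i * c j * ((1 - Real.cos ((t i - t j) * u)) * u ^ (-(1 + α))) :=
          integral_finset_sum _ (fun i _ => integrable_finset_sum _ (fun j _ => hintij i j))
        rw [h1]
        exact Finset.sum_congr rfl fun i _ =>
          ((integral_finset_sum _ (fun j _ => hintij i j))).symm
      rw [hSI, hswap]
      apply integral_nonpos_of_ae
      filter_upwards [ae_restrict_mem measurableSet_Ioi] with u hu
      have hu0 : (0:ℝ) < u := hu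
      have hpt : ∀ i j : Fin n,
          c i * c j * ((1 - Real.cos ((t i - t j) * u)) * u ^ (-(1 + α)))
          = c i * c j * (1 - Real.cos (t i * u - t j * u)) * u ^ (-(1 + α)) := by
        intro i j
        rw [sub_mul]
        ring
      simp_rw [hpt, ← Finset.sum_mul]
      have := negdef_sum_cos n c (fun i => t i * u) hc
      rw [this]
      have hpow : (0:ℝ) ≤ u ^ (-(1 + α)) := Real.rpow_nonneg hu0.le _
      have hsq : (0:ℝ) ≤ (∑ i, c i * Real.cos (t i * u)) ^ 2
          + (∑ i, c i * Real.sin (t i * u)) ^ 2 := by positivity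
      exact mul_nonpos_of_nonpos_of_nonneg (by linarith) hpow
    nlinarith
end

section
/- For every H ∈ (0,1), every n ∈ ℕ and all pairwise distinct positive times 0 < t_1 < t_2 < … < t_n, the n × n matrix with entries M_{ij} = ½(t_i^{2H} + t_j^{2H} − |t_i − t_j|^{2H}) is positive definite; equivalently, if c_1,…,c_n ∈ ℝ satisfy Σ_{i,j} c_i c_j · ½(t_i^{2H} + t_j^{2H} − |t_i − t_j|^{2H}) = 0, then c_1 = … = c_n = 0. -/
open MeasureTheory Real Set Filter

noncomputable section

namespace FbmAux

lemma one_sub_cos_nonneg (y : ℝ) : 0 ≤ 1 - Real.cos y := by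
  linarith [Real.cos_le_one y]

lemma one_sub_cos_le_two (y : ℝ) : 1 - Real.cos y ≤ 2 := by
  linarith [Real.neg_one_le_cos y]

lemma one_sub_cos_le_sq (y : ℝ) : 1 - Real.cos y ≤ y ^ 2 := by
  have h1 : Real.sin (y / 2) ^ 2 ≤ (y / 2) ^ 2 := Real.sin_sq_le_sq (x := y / 2)
  have h2 : Real.sin (y / 2) ^ 2 = 1 / 2 - Real.cos (2 * (y / 2)) / 2 :=
    Real.sin_sq_eq_half_sub _
  have : 2 * (y / 2) = y := by ring
  rw [this] at h2
  nlinarith [sq_nonneg y]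

/-- weight times `1 - cos (t x)` is integrable on `(0, ∞)`. -/
lemma integrable_g {α : ℝ} (hα : α ∈ Set.Ioo (0:ℝ) 2) (t : ℝ) :
    IntegrableOn (fun x => (1 - Real.cos (t * x)) * x ^ (-1 - α)) (Ioi (0:ℝ)) := by
  obtain ⟨hα0, hα2⟩ := hα
  have hmeas : ∀ s : Set ℝ, s ⊆ Ioi 0 → MeasurableSet s →
      AEStronglyMeasurable (fun x => (1 - Real.cos (t * x)) * x ^ (-1 - α))
        (volume.restrict s) := by
    intro s hs hsm
    apply ContinuousOn.aestronglyMeasurable _ hsm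
    apply ContinuousOn.mul
    · exact (Continuous.continuousOn (by continuity))
    · intro x hx
      exact (Real.continuousAt_rpow_const x _ (Or.inl (ne_of_gt (hs hx)))).continuousWithinAt
  have h1 : IntegrableOn (fun x => (1 - Real.cos (t * x)) * x ^ (-1 - α)) (Ioc (0:ℝ) 1) := by
    have hbase : IntegrableOn (fun x : ℝ => x ^ (1 - α)) (Ioc (0:ℝ) 1) := by
      have := intervalIntegral.intervalIntegrable_rpow' (a := 0) (b := 1) (r := 1 - α) (by linarith)
      rwa [intervalIntegrable_iff_integrableOn_Ioc_of_le (by norm_num)] at this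
    refine Integrable.mono (hbase.smul (t ^ 2)) (hmeas _ Ioc_subset_Ioi_self measurableSet_Ioc) ?_
    filter_upwards [ae_restrict_mem measurableSet_Ioc] with x hx
    simp only [Pi.smul_apply, smul_eq_mul]
    have hx0 : 0 < x := hx.1
    have hb : (1 - Real.cos (t * x)) * x ^ (-1 - α) ≤ t ^ 2 * x ^ (1 - α) := by
      have h1 : 1 - Real.cos (t * x) ≤ (t * x) ^ 2 := one_sub_cos_le_sq _
      have hw : (0:ℝ) ≤ x ^ (-1 - α) := Real.rpow_nonneg hx0.le _
      have h2 : (1 - Real.cos (t * x)) * x ^ (-1 - α) ≤ (t * x) ^ 2 * x ^ (-1 - α) :=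
        mul_le_mul_of_nonneg_right h1 hw
      have h3 : (t * x) ^ 2 * x ^ (-1 - α) = t ^ 2 * x ^ (1 - α) := by
        rw [mul_pow]
        have : (x:ℝ) ^ 2 * x ^ (-1 - α) = x ^ (1 - α) := by
          rw [← Real.rpow_natCast x 2, ← Real.rpow_add hx0]
          congr 1; ring
        rw [mul_assoc, this]
      linarith [h2, h3.le.trans (le_refl _)]
    have hnn : 0 ≤ (1 - Real.cos (t * x)) * x ^ (-1 - α) :=
      mul_nonneg (one_sub_cos_nonneg _) (Real.rpow_nonneg hx0.le _)
    rw [Real.norm_eq_abs, Real.norm_eq_abs, abs_of_nonneg hnn]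
    calc (1 - Real.cos (t * x)) * x ^ (-1 - α) ≤ t ^ 2 * x ^ (1 - α) := hb
      _ ≤ |t ^ 2 * x ^ (1 - α)| := le_abs_self _
      _ = |t ^ 2 • x ^ (1 - α)| := by rw [smul_eq_mul]
  have h2 : IntegrableOn (fun x => (1 - Real.cos (t * x)) * x ^ (-1 - α)) (Ioi (1:ℝ)) := by
    have hbase : IntegrableOn (fun x : ℝ => x ^ (-1 - α)) (Ioi (1:ℝ)) :=
      integrableOn_Ioi_rpow_of_lt (by linarith) one_pos
    refine Integrable.mono (hbase.smul (2:ℝ))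
      (hmeas _ (Set.Ioi_subset_Ioi zero_le_one) measurableSet_Ioi) ?_
    filter_upwards [ae_restrict_mem measurableSet_Ioi] with x hx
    simp only [Pi.smul_apply, smul_eq_mul]
    have hx0 : (0:ℝ) < x := lt_trans one_pos hx
    have hw : (0:ℝ) ≤ x ^ (-1 - α) := Real.rpow_nonneg hx0.le _
    have hnn : 0 ≤ (1 - Real.cos (t * x)) * x ^ (-1 - α) :=
      mul_nonneg (one_sub_cos_nonneg _) hw
    rw [Real.norm_eq_abs, Real.norm_eq_abs, abs_of_nonneg hnn,
      abs_of_nonneg (by positivity)]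
    exact mul_le_mul_of_nonneg_right (one_sub_cos_le_two _) hw
  have : Ioi (0:ℝ) ⊆ Ioc 0 1 ∪ Ioi 1 := by
    intro x hx
    rcases le_or_gt x 1 with h | h
    · exact Or.inl ⟨hx, h⟩
    · exact Or.inr h
  exact (h1.union h2).mono_set this


def Ifun (α t : ℝ) : ℝ := ∫ x in Ioi (0:ℝ), (1 - Real.cos (t * x)) * x ^ (-1 - α)

lemma Ifun_neg (α t : ℝ) : Ifun α (-t) = Ifun α t := by
  simp only [Ifun, neg_mul, Real.cos_neg]

lemma Ifun_scale {α : ℝ} (hα : α ∈ Set.Ioo (0:ℝ) 2) {t : ℝ} (ht : 0 < t) :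
    Ifun α t = t ^ α * Ifun α 1 := by
  have key : ∀ x ∈ Ioi (0:ℝ), (1 - Real.cos (t * x)) * x ^ (-1 - α)
      = t ^ (1 + α) • ((fun u => (1 - Real.cos u) * u ^ (-1 - α)) (t * x)) := by
    intro x hx
    have hx0 : (0:ℝ) < x := hx
    simp only [smul_eq_mul]
    rw [Real.mul_rpow ht.le hx0.le]
    have : t ^ (1 + α) * t ^ (-1 - α) = 1 := by
      rw [← Real.rpow_add ht]
      norm_num
    calc (1 - Real.cos (t * x)) * x ^ (-1 - α)
        = (t ^ (1 + α) * t ^ (-1 - α)) * ((1 - Real.cos (t * x)) * x ^ (-1 - α)) := by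
          rw [this, one_mul]
      _ = t ^ (1 + α) * ((1 - Real.cos (t * x)) * (t ^ (-1 - α) * x ^ (-1 - α))) := by ring
  have h2 := integral_comp_mul_left_Ioi (fun u => (1 - Real.cos u) * u ^ (-1 - α)) 0 ht
  rw [Ifun, setIntegral_congr_fun measurableSet_Ioi key, integral_smul]
  simp only
  rw [h2]
  have h1 : Ifun α 1 = ∫ x in Ioi (t * 0), (1 - Real.cos x) * x ^ (-1 - α) := by
    rw [mul_zero, Ifun]
    simp only [one_mul]
  rw [← h1, smul_eq_mul, smul_eq_mul, ← mul_assoc]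
  congr 1
  rw [← Real.rpow_neg_one t, ← Real.rpow_add ht]
  congr 1; ring

lemma Ifun_abs {α : ℝ} (hα : α ∈ Set.Ioo (0:ℝ) 2) (a : ℝ) :
    Ifun α a = |a| ^ α * Ifun α 1 := by
  rcases lt_trichotomy a 0 with h | h | h
  · rw [← Ifun_neg, Ifun_scale hα (by linarith), abs_of_neg h]
  · subst h
    simp only [Ifun, zero_mul, Real.cos_zero, sub_self, zero_mul, integral_zero, abs_zero,
      Real.zero_rpow (ne_of_gt hα.1), zero_mul]
  · rw [Ifun_scale hα h, abs_of_pos h]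

lemma Ifun_one_pos {α : ℝ} (hα : α ∈ Set.Ioo (0:ℝ) 2) : 0 < Ifun α 1 := by
  have hint : IntegrableOn (fun x => (1 - Real.cos (1 * x)) * x ^ (-1 - α)) (Ioi (0:ℝ)) :=
    integrable_g hα 1
  have hnn : 0 ≤ᵐ[volume.restrict (Ioi (0:ℝ))]
      fun x => (1 - Real.cos (1 * x)) * x ^ (-1 - α) := by
    filter_upwards [ae_restrict_mem measurableSet_Ioi] with x hx
    exact mul_nonneg (one_sub_cos_nonneg _) (Real.rpow_nonneg (le_of_lt hx) _)
  have h1 : Ifun α 1 = ∫ x in Ioi (0:ℝ), (1 - Real.cos (1 * x)) * x ^ (-1 - α) := rfl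
  rw [h1, setIntegral_pos_iff_support_of_nonneg_ae hnn hint]
  have hsub : Ioo (1:ℝ) 2 ⊆
      Function.support (fun x => (1 - Real.cos (1 * x)) * x ^ (-1 - α)) ∩ Ioi 0 := by
    intro x hx
    have hx0 : (0:ℝ) < x := lt_trans one_pos hx.1
    constructor
    · have hcos : Real.cos x < 1 := by
        have h2pi : x < 2 * Real.pi := lt_trans hx.2 (by linarith [Real.pi_gt_three])
        have := Real.cos_eq_one_iff_of_lt_of_lt (x := x) (by linarith) h2pi
        rcases lt_or_eq_of_le (Real.cos_le_one x) with h | h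
        · exact h
        · exact absurd (this.1 h) (by linarith [hx.1])
      have : (0:ℝ) < (1 - Real.cos (1 * x)) * x ^ (-1 - α) := by
        rw [one_mul]
        exact mul_pos (by linarith) (Real.rpow_pos_of_pos hx0 _)
      exact ne_of_gt this
    · exact hx0
  calc (0:ENNReal) < volume (Ioo (1:ℝ) 2) := by simp [Real.volume_Ioo]
    _ ≤ _ := measure_mono hsub


lemma K_eq (α a b x : ℝ) :
    ((1 - Real.cos (a * x)) * (1 - Real.cos (b * x)) + Real.sin (a * x) * Real.sin (b * x))
        * x ^ (-1 - α)
      = (1 - Real.cos (a * x)) * x ^ (-1 - α) + (1 - Real.cos (b * x)) * x ^ (-1 - α)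
        - (1 - Real.cos ((a - b) * x)) * x ^ (-1 - α) := by
  have h : Real.cos ((a - b) * x)
      = Real.cos (a * x) * Real.cos (b * x) + Real.sin (a * x) * Real.sin (b * x) := by
    rw [sub_mul]; exact Real.cos_sub _ _
  rw [h]; ring

lemma add_integrable {α : ℝ} (hα : α ∈ Set.Ioo (0:ℝ) 2) (a b : ℝ) :
    IntegrableOn (fun x => (1 - Real.cos (a * x)) * x ^ (-1 - α)
      + (1 - Real.cos (b * x)) * x ^ (-1 - α)) (Ioi (0:ℝ)) := by
  have h := (integrable_g hα a).add (integrable_g hα b)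
  exact h.congr (Eventually.of_forall fun x => by simp)

lemma K_integrable {α : ℝ} (hα : α ∈ Set.Ioo (0:ℝ) 2) (a b : ℝ) :
    IntegrableOn (fun x =>
      ((1 - Real.cos (a * x)) * (1 - Real.cos (b * x)) + Real.sin (a * x) * Real.sin (b * x))
        * x ^ (-1 - α)) (Ioi (0:ℝ)) := by
  have h := (add_integrable hα a b).sub (integrable_g hα (a - b))
  exact h.congr (Eventually.of_forall fun x => by
    simp only [Pi.sub_apply]
    exact (K_eq α a b x).symm)

lemma K_integral {α : ℝ} (hα : α ∈ Set.Ioo (0:ℝ) 2) (a b : ℝ) :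
    ∫ x in Ioi (0:ℝ),
      ((1 - Real.cos (a * x)) * (1 - Real.cos (b * x)) + Real.sin (a * x) * Real.sin (b * x))
        * x ^ (-1 - α)
      = (|a| ^ α + |b| ^ α - |a - b| ^ α) * Ifun α 1 := by
  rw [setIntegral_congr_fun measurableSet_Ioi (fun x _ => K_eq α a b x)]
  rw [integral_sub (add_integrable hα a b) (integrable_g hα (a - b)),
    integral_add (integrable_g hα a) (integrable_g hα b)]
  have ha := Ifun_abs hα a
  have hb := Ifun_abs hα b
  have hab := Ifun_abs hα (a - b)
  simp only [Ifun] at ha hb hab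
  rw [ha, hb, hab, Ifun]; ring

lemma quad_eq {α : ℝ} (hα : α ∈ Set.Ioo (0:ℝ) 2) {n : ℕ} (t c : Fin n → ℝ) :
    ∫ x in Ioi (0:ℝ),
        ((∑ i, c i * (1 - Real.cos (t i * x))) ^ 2
          + (∑ i, c i * Real.sin (t i * x)) ^ 2) * x ^ (-1 - α)
      = (∑ i, ∑ j, c i * c j * (|t i| ^ α + |t j| ^ α - |t i - t j| ^ α))
          * Ifun α 1 := by
  have hpt : ∀ x : ℝ,
      ((∑ i, c i * (1 - Real.cos (t i * x))) ^ 2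
          + (∑ i, c i * Real.sin (t i * x)) ^ 2) * x ^ (-1 - α)
      = ∑ i, ∑ j, (c i * c j) *
          (((1 - Real.cos (t i * x)) * (1 - Real.cos (t j * x))
            + Real.sin (t i * x) * Real.sin (t j * x)) * x ^ (-1 - α)) := by
    intro x
    rw [sq, sq, Finset.sum_mul_sum, Finset.sum_mul_sum, ← Finset.sum_add_distrib,
      Finset.sum_mul]
    refine Finset.sum_congr rfl fun i _ => ?_
    rw [← Finset.sum_add_distrib, Finset.sum_mul]
    refine Finset.sum_congr rfl fun j _ => ?_
    ring
  rw [integral_congr_ae (Eventually.of_forall fun x => hpt x)]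
  rw [integral_finset_sum _ (fun i _ => integrable_finset_sum _
    (fun j _ => ((K_integrable hα (t i) (t j)).const_mul (c i * c j))))]
  rw [Finset.sum_mul]
  refine Finset.sum_congr rfl fun i _ => ?_
  rw [integral_finset_sum _ (fun j _ => ((K_integrable hα (t i) (t j)).const_mul (c i * c j))),
    Finset.sum_mul]
  refine Finset.sum_congr rfl fun j _ => ?_
  rw [integral_const_mul, K_integral hα]
  ring


/-- The additive character `x ↦ exp(i s x)` as a monoid hom on `Multiplicative ℝ`. -/
def char (s : ℝ) : Multiplicative ℝ →* ℂ where
  toFun x := Complex.exp ((s * Multiplicative.toAdd x : ℝ) * Complex.I)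
  map_one' := by
    simp
  map_mul' x y := by
    simp only [toAdd_mul]
    rw [← Complex.exp_add]
    congr 1
    push_cast
    ring

lemma char_apply (s : ℝ) (x : Multiplicative ℝ) :
    char s x = Complex.exp ((s * Multiplicative.toAdd x : ℝ) * Complex.I) := rfl

lemma char_injective : Function.Injective char := by
  intro s s' h
  by_contra hne
  have hd : s - s' ≠ 0 := sub_ne_zero.mpr hne
  set θ : ℝ := Real.pi / (s - s') with hθ
  have hx := DFunLike.congr_fun h (Multiplicative.ofAdd θ)
  rw [char_apply, char_apply] at hx
  simp only [toAdd_ofAdd] at hx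
  rw [Complex.exp_eq_exp_iff_exists_int] at hx
  obtain ⟨m, hm⟩ := hx
  have him : (s * θ : ℝ) = (s' * θ : ℝ) + m * (2 * Real.pi) := by
    have := congrArg Complex.im hm
    simpa [Complex.mul_im, Complex.ofReal_re, Complex.ofReal_im] using this
  have hθval : (s - s') * θ = Real.pi := by
    rw [hθ]; field_simp
  have : Real.pi = m * (2 * Real.pi) := by nlinarith [him, hθval]
  have h2 : (1 : ℝ) = 2 * m := by
    have hpi := Real.pi_ne_zero
    field_simp at this
    nlinarith [this, Real.pi_pos]
  have : (1 : ℤ) = 2 * m := by exact_mod_cast h2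
  omega

lemma coeffs_zero {n : ℕ} (t c : Fin n → ℝ) (ht_pos : ∀ i, 0 < t i)
    (ht_inj : Function.Injective t)
    (hcos : ∀ x : ℝ, 0 < x → ∑ i, c i * (1 - Real.cos (t i * x)) = 0)
    (hsin : ∀ x : ℝ, 0 < x → ∑ i, c i * Real.sin (t i * x) = 0) :
    ∀ i, c i = 0 := by
  -- the complex exponential sum is constant on all of ℝ
  have hexp_pos : ∀ x : ℝ, 0 < x →
      ∑ i, (c i : ℂ) * Complex.exp ((t i * x : ℝ) * Complex.I) = ((∑ i, c i : ℝ) : ℂ) := by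
    intro x hx
    have hc : (∑ i, c i * Real.cos (t i * x)) = ∑ i, c i := by
      have := hcos x hx
      have hsplit : ∑ i, c i * (1 - Real.cos (t i * x))
          = (∑ i, c i) - ∑ i, c i * Real.cos (t i * x) := by
        rw [← Finset.sum_sub_distrib]
        exact Finset.sum_congr rfl fun i _ => by ring
      rw [hsplit] at this
      linarith
    have hs := hsin x hx
    calc ∑ i, (c i : ℂ) * Complex.exp ((t i * x : ℝ) * Complex.I)
        = ∑ i, (c i : ℂ) * (Real.cos (t i * x) + Real.sin (t i * x) * Complex.I) := by
          refine Finset.sum_congr rfl fun i _ => ?_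
          rw [Complex.exp_mul_I, ← Complex.ofReal_cos, ← Complex.ofReal_sin]
      _ = ((∑ i, c i * Real.cos (t i * x) : ℝ) : ℂ)
            + ((∑ i, c i * Real.sin (t i * x) : ℝ) : ℂ) * Complex.I := by
          push_cast
          rw [Finset.sum_mul]
          rw [← Finset.sum_add_distrib]
          refine Finset.sum_congr rfl fun i _ => ?_
          ring
      _ = ((∑ i, c i : ℝ) : ℂ) := by rw [hc, hs]; simp
  have hexp : ∀ x : ℝ,
      ∑ i, (c i : ℂ) * Complex.exp ((t i * x : ℝ) * Complex.I) = ((∑ i, c i : ℝ) : ℂ) := by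
    intro x
    rcases lt_trichotomy x 0 with hx | hx | hx
    · have h1 := hexp_pos (-x) (by linarith)
      have h2 := congrArg (starRingEnd ℂ) h1
      rw [map_sum] at h2
      simp only [map_mul, Complex.conj_ofReal] at h2
      have h3 : ∀ i : Fin n,
          (starRingEnd ℂ) (Complex.exp ((t i * -x : ℝ) * Complex.I))
            = Complex.exp ((t i * x : ℝ) * Complex.I) := by
        intro i
        rw [← Complex.exp_conj]
        congr 1
        rw [map_mul, Complex.conj_ofReal, Complex.conj_I]
        push_cast
        ring
      rw [Finset.sum_congr rfl (fun i _ => by rw [h3 i])] at h2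
      simpa using h2
    · subst hx
      simp
    · exact hexp_pos x hx
  -- set up linear independence of characters
  have hparam_inj : Function.Injective (fun o : Option (Fin n) => (Option.elim o 0 t : ℝ)) := by
    intro o o' h
    simp only [Option.elim] at h
    match o, o' with
    | none, none => rfl
    | none, some i => exact absurd h.symm (ht_pos i).ne'
    | some i, none => exact absurd h (ht_pos i).ne'
    | some i, some j => exact congrArg some (ht_inj h)
  have li := (linearIndependent_monoidHom (Multiplicative ℝ) ℂ).comp
    (fun o : Option (Fin n) => char (Option.elim o 0 t))
    (fun o o' h => hparam_inj (char_injective h))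
  rw [Fintype.linearIndependent_iff] at li
  set g : Option (Fin n) → ℂ := fun o => Option.elim o (-((∑ i, c i : ℝ) : ℂ)) (fun i => (c i : ℂ))
    with hg
  have hsum : ∑ o : Option (Fin n), g o • ((char (Option.elim o 0 t)) : Multiplicative ℝ → ℂ)
      = 0 := by
    funext x
    simp only [Finset.sum_apply, Pi.smul_apply, smul_eq_mul, Pi.zero_apply]
    rw [Fintype.sum_option]
    simp only [hg, Option.elim]
    have h0 : (char 0) x = 1 := by
      rw [char_apply]
      simp
    rw [h0]
    have hsum2 : ∑ i : Fin n, (c i : ℂ) * (char (t i)) x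
        = ((∑ i, c i : ℝ) : ℂ) := by
      have e : ∀ i : Fin n, (c i : ℂ) * (char (t i)) x
          = (c i : ℂ) * Complex.exp ((t i * Multiplicative.toAdd x : ℝ) * Complex.I) :=
        fun i => rfl
      rw [Finset.sum_congr rfl fun i _ => e i]
      exact hexp _
    rw [hsum2]
    ring
  intro i
  have := li g (by
    have : ∑ o : Option (Fin n), g o • (fun o' : Option (Fin n) =>
        ((char (Option.elim o' 0 t)) : Multiplicative ℝ → ℂ)) o = 0 := hsum
    exact this) (some i)
  simpa [hg] using this


lemma pointwise_eq {α : ℝ} {n : ℕ} (t c : Fin n → ℝ) (x : ℝ) :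
    ((∑ i, c i * (1 - Real.cos (t i * x))) ^ 2
        + (∑ i, c i * Real.sin (t i * x)) ^ 2) * x ^ (-1 - α)
    = ∑ i, ∑ j, (c i * c j) *
        (((1 - Real.cos (t i * x)) * (1 - Real.cos (t j * x))
          + Real.sin (t i * x) * Real.sin (t j * x)) * x ^ (-1 - α)) := by
  rw [sq, sq, Finset.sum_mul_sum, Finset.sum_mul_sum, ← Finset.sum_add_distrib,
    Finset.sum_mul]
  refine Finset.sum_congr rfl fun i _ => ?_
  rw [← Finset.sum_add_distrib, Finset.sum_mul]
  refine Finset.sum_congr rfl fun j _ => ?_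
  ring

lemma F_integrable {α : ℝ} (hα : α ∈ Set.Ioo (0:ℝ) 2) {n : ℕ} (t c : Fin n → ℝ) :
    IntegrableOn (fun x => ((∑ i, c i * (1 - Real.cos (t i * x))) ^ 2
        + (∑ i, c i * Real.sin (t i * x)) ^ 2) * x ^ (-1 - α)) (Ioi (0:ℝ)) := by
  have h : IntegrableOn (fun x => ∑ i, ∑ j, (c i * c j) *
      (((1 - Real.cos (t i * x)) * (1 - Real.cos (t j * x))
        + Real.sin (t i * x) * Real.sin (t j * x)) * x ^ (-1 - α))) (Ioi (0:ℝ)) :=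
    integrable_finset_sum _ (fun i _ => integrable_finset_sum _
      (fun j _ => ((K_integrable hα (t i) (t j)).const_mul (c i * c j))))
  exact h.congr (Eventually.of_forall fun x => (pointwise_eq t c x).symm)

lemma quad_nonneg {α : ℝ} (hα : α ∈ Set.Ioo (0:ℝ) 2) {n : ℕ} (t c : Fin n → ℝ) :
    0 ≤ ∑ i, ∑ j, c i * c j * (|t i| ^ α + |t j| ^ α - |t i - t j| ^ α) := by
  have h := quad_eq hα t c
  have hI := Ifun_one_pos hα
  have hnn : 0 ≤ ∫ x in Ioi (0:ℝ),
      ((∑ i, c i * (1 - Real.cos (t i * x))) ^ 2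
        + (∑ i, c i * Real.sin (t i * x)) ^ 2) * x ^ (-1 - α) :=
    setIntegral_nonneg measurableSet_Ioi fun x hx =>
      mul_nonneg (by positivity) (Real.rpow_nonneg (le_of_lt hx) _)
  rw [h] at hnn
  nlinarith [hnn, hI, mul_pos hI hI]

lemma sums_vanish {α : ℝ} (hα : α ∈ Set.Ioo (0:ℝ) 2) {n : ℕ} (t c : Fin n → ℝ)
    (h0 : ∑ i, ∑ j, c i * c j * (|t i| ^ α + |t j| ^ α - |t i - t j| ^ α) = 0) :
    ∀ x : ℝ, 0 < x → (∑ i, c i * (1 - Real.cos (t i * x))) = 0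
      ∧ (∑ i, c i * Real.sin (t i * x)) = 0 := by
  set F : ℝ → ℝ := fun x => ((∑ i, c i * (1 - Real.cos (t i * x))) ^ 2
      + (∑ i, c i * Real.sin (t i * x)) ^ 2) * x ^ (-1 - α) with hF
  have hFint : IntegrableOn F (Ioi (0:ℝ)) := F_integrable hα t c
  have hF0 : ∫ x in Ioi (0:ℝ), F x = 0 := by
    rw [hF]
    simp only
    rw [quad_eq hα t c, h0, zero_mul]
  have hnn : 0 ≤ᵐ[volume.restrict (Ioi (0:ℝ))] F := by
    filter_upwards [ae_restrict_mem measurableSet_Ioi] with x hx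
    exact mul_nonneg (by positivity) (Real.rpow_nonneg (le_of_lt hx) _)
  have hae : F =ᵐ[volume.restrict (Ioi (0:ℝ))] 0 :=
    (integral_eq_zero_iff_of_nonneg_ae hnn hFint).mp hF0
  have hcont : ContinuousOn F (Ioi (0:ℝ)) := by
    apply ContinuousOn.mul
    · apply Continuous.continuousOn
      apply Continuous.add
      · exact (continuous_finset_sum _ fun i _ => by fun_prop).pow 2
      · exact (continuous_finset_sum _ fun i _ => by fun_prop).pow 2
    · intro x hx
      exact (Real.continuousAt_rpow_const x _ (Or.inl (ne_of_gt hx))).continuousWithinAt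
  have heq : EqOn F 0 (Ioi (0:ℝ)) :=
    Measure.eqOn_open_of_ae_eq hae isOpen_Ioi hcont continuousOn_const
  intro x hx
  have hFx : F x = 0 := heq hx
  have hw : 0 < x ^ (-1 - α) := Real.rpow_pos_of_pos hx _
  have hsq : (∑ i, c i * (1 - Real.cos (t i * x))) ^ 2
      + (∑ i, c i * Real.sin (t i * x)) ^ 2 = 0 := by
    have := mul_eq_zero.mp hFx
    rcases this with h | h
    · exact h
    · exact absurd h (ne_of_gt hw)
  constructor
  · nlinarith [sq_nonneg (∑ i, c i * (1 - Real.cos (t i * x))),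
      sq_nonneg (∑ i, c i * Real.sin (t i * x))]
  · nlinarith [sq_nonneg (∑ i, c i * (1 - Real.cos (t i * x))),
      sq_nonneg (∑ i, c i * Real.sin (t i * x))]

lemma half_sum_eq {α : ℝ} {n : ℕ} (t c : Fin n → ℝ) (ht_pos : ∀ i, 0 < t i) :
    ∑ i, ∑ j, c i * c j * (1 / 2 * (t i ^ α + t j ^ α - |t i - t j| ^ α))
    = 1 / 2 * ∑ i, ∑ j, c i * c j * (|t i| ^ α + |t j| ^ α - |t i - t j| ^ α) := by
  rw [Finset.mul_sum]
  refine Finset.sum_congr rfl fun i _ => ?_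
  rw [Finset.mul_sum]
  refine Finset.sum_congr rfl fun j _ => ?_
  rw [abs_of_pos (ht_pos i), abs_of_pos (ht_pos j)]
  ring

lemma main_nonneg {α : ℝ} (hα : α ∈ Set.Ioo (0:ℝ) 2) {n : ℕ} (t c : Fin n → ℝ)
    (ht_pos : ∀ i, 0 < t i) :
    0 ≤ ∑ i, ∑ j, c i * c j * (1 / 2 * (t i ^ α + t j ^ α - |t i - t j| ^ α)) := by
  rw [half_sum_eq t c ht_pos]
  have := quad_nonneg hα t c
  linarith

lemma main_zero {α : ℝ} (hα : α ∈ Set.Ioo (0:ℝ) 2) {n : ℕ} (t c : Fin n → ℝ)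
    (ht_pos : ∀ i, 0 < t i) (ht_inj : Function.Injective t)
    (h : ∑ i, ∑ j, c i * c j * (1 / 2 * (t i ^ α + t j ^ α - |t i - t j| ^ α)) = 0) :
    ∀ i, c i = 0 := by
  rw [half_sum_eq t c ht_pos] at h
  have hE : ∑ i, ∑ j, c i * c j * (|t i| ^ α + |t j| ^ α - |t i - t j| ^ α) = 0 := by
    linarith
  have hv := sums_vanish hα t c hE
  exact coeffs_zero t c ht_pos ht_inj (fun x hx => (hv x hx).1) (fun x hx => (hv x hx).2)

end FbmAux

end

/-- For `H ∈ (0,1)` and pairwise distinct positive times `0 < t_1 < … < t_n`, the Gram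
matrix of the fractional Brownian motion covariance kernel
`cov_H(t,s) = ½(t^{2H} + s^{2H} − |t−s|^{2H})` is positive definite. -/
theorem fbm_covariance_posDef (H : ℝ) (hH : H ∈ Set.Ioo (0 : ℝ) 1)
    (n : ℕ) (t : Fin n → ℝ) (ht_pos : ∀ i, 0 < t i)
    (ht_mono : ∀ i j : Fin n, i < j → t i < t j) :
    (Matrix.of fun i j : Fin n =>
      (1 : ℝ) / 2 * (t i ^ (2 * H) + t j ^ (2 * H) - |t i - t j| ^ (2 * H))).PosDef ∧
    ∀ c : Fin n → ℝ,
      (∑ i, ∑ j, c i * c j *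
        ((1 : ℝ) / 2 * (t i ^ (2 * H) + t j ^ (2 * H) - |t i - t j| ^ (2 * H))) = 0) →
      ∀ i, c i = 0 := by
  have hα : 2 * H ∈ Set.Ioo (0:ℝ) 2 := ⟨by linarith [hH.1], by linarith [hH.2]⟩
  have ht_inj : Function.Injective t := by
    intro i j h
    by_contra hne
    rcases lt_or_gt_of_ne hne with hlt | hlt
    · exact absurd h (ne_of_lt (ht_mono i j hlt))
    · exact absurd h.symm (ne_of_lt (ht_mono j i hlt))
  have hzero : ∀ c : Fin n → ℝ,
      (∑ i, ∑ j, c i * c j *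
        ((1 : ℝ) / 2 * (t i ^ (2 * H) + t j ^ (2 * H) - |t i - t j| ^ (2 * H))) = 0) →
      ∀ i, c i = 0 := fun c h => FbmAux.main_zero hα t c ht_pos ht_inj h
  refine ⟨⟨?_, ?_⟩, hzero⟩
  · -- Hermitian
    ext i j
    simp only [Matrix.conjTranspose_apply, Matrix.of_apply, star_trivial]
    rw [abs_sub_comm]
    ring
  · intro x hx
    have hdot : dotProduct (star x)
        (Matrix.mulVec (Matrix.of fun i j : Fin n =>
          (1 : ℝ) / 2 * (t i ^ (2 * H) + t j ^ (2 * H) - |t i - t j| ^ (2 * H))) x)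
        = ∑ i, ∑ j, x i * x j *
          ((1 : ℝ) / 2 * (t i ^ (2 * H) + t j ^ (2 * H) - |t i - t j| ^ (2 * H))) := by
      simp only [dotProduct, Matrix.mulVec, Matrix.of_apply, Pi.star_apply, star_trivial,
        Finset.mul_sum]
      refine Finset.sum_congr rfl fun i _ => ?_
      refine Finset.sum_congr rfl fun j _ => ?_
      ring
    have hfs : ∀ i, (x.sum fun j xj => star (x i) * (Matrix.of fun i j : Fin n =>
        (1 : ℝ) / 2 * (t i ^ (2 * H) + t j ^ (2 * H) - |t i - t j| ^ (2 * H))) i j * xj)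
        = ∑ j, x i * x j *
          ((1 : ℝ) / 2 * (t i ^ (2 * H) + t j ^ (2 * H) - |t i - t j| ^ (2 * H))) := fun i => by
      rw [Finsupp.sum_fintype _ _ (fun j => by simp)]
      simp only [Matrix.of_apply, star_trivial]
      refine Finset.sum_congr rfl fun j _ => ?_
      ring
    rw [Finsupp.sum_fintype _ _ (fun i => by simp), Finset.sum_congr rfl fun i _ => hfs i]
    have hnn := FbmAux.main_nonneg hα t x ht_pos
    rcases lt_or_eq_of_le hnn with h | h
    · exact h
    · exact absurd (Finsupp.ext (hzero x h.symm) : x = 0) hx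
end
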